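/- Let F(x) = x^{p^k+1} on F_{p^n}, and let c in F_{p^{gcd(k,n)}} with c != 1. Then for any t >= 1, the maximum over a_1,...,a_t, b in F_{p^n} of the number of solutions x of _cD^{(t)}_{a_1,...,a_t}F(x) = b equals gcd(p^k+1, p^n-1). -/

import Mathlib

/-- The multiplicative `c`-derivative of `F` in direction `a`. -/
def cDeriv {K L : Type*} [Add K] [Ring L] (c : L) (a : K) (F : K → L) : K → L :=
  fun x => F (x + a) - c * F x

/-- The iterated (higher order) `c`-derivative of `F` in directions `as = [a₁, …, aₜ]`,
differentiating first in direction `a₁`, then `a₂`, etc. -/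
def cDerivIter {K L : Type*} [Add K] [Ring L] (c : L) (as : List K) (F : K → L) : K → L :=
  as.foldl (fun G a => cDeriv c a G) F

section Aux

variable {K : Type*} [Field K]

lemma cDerivIter_cons {K L : Type*} [Add K] [Ring L] (c : L) (a : K) (as : List K) (F : K → L) :
    cDerivIter c (a :: as) F = cDerivIter c as (cDeriv c a F) := rfl

lemma cDerivIter_nil {K L : Type*} [Add K] [Ring L] (c : L) (F : K → L) :
    cDerivIter c [] F = F := rfl

/-- One step of the derivative keeps the shifted-power shape. -/
lemma cDeriv_step (q : ℕ) (c : K) (hfrob : ∀ a b : K, (a + b) ^ q = a ^ q + b ^ q)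
    (hcq : c ^ q = c) (hc : c ≠ 1) (a e μ : K) (j : ℕ) :
    ∃ e' μ', cDeriv c a (fun x => (1 - c) ^ j * (x + e) ^ (q + 1) + μ)
      = fun x => (1 - c) ^ (j + 1) * (x + e') ^ (q + 1) + μ' := by
  set s : K := 1 - c with hsdef
  have hs : s ≠ 0 := sub_ne_zero.mpr (fun h => hc h.symm)
  have hsq : s ^ q = s := by
    have h1 : ((1 : K)) ^ q = 1 := one_pow q
    have h2 := hfrob s c
    have hsc : s + c = 1 := by rw [hsdef]; ring
    rw [hsc, h1, hcq] at h2
    linear_combination -h2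
  have key : ∀ y : K, (y + a) ^ (q + 1) - c * y ^ (q + 1)
      = s * (y + a / s) ^ (q + 1) + (a ^ (q + 1) - a ^ (q + 1) / s) := by
    intro y
    have h1 : (y + a) ^ (q + 1) = (y ^ q + a ^ q) * (y + a) := by
      rw [pow_succ, hfrob]
    have h2 : (y + a / s) ^ (q + 1) = (y ^ q + a ^ q / s) * (y + a / s) := by
      rw [pow_succ, hfrob, div_pow, hsq]
    have h3 : y ^ (q + 1) = y ^ q * y := pow_succ y q
    have h4 : a ^ (q + 1) = a ^ q * a := pow_succ a q
    rw [h1, h2, h3, h4]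
    field_simp
    ring
  refine ⟨e + a / s, (1 - c) ^ j * (a ^ (q + 1) - a ^ (q + 1) / s) + s * μ, ?_⟩
  funext x
  simp only [cDeriv]
  have hkey := key (x + e)
  have hpow : (1 - c) ^ (j + 1) = (1 - c) ^ j * s := by rw [pow_succ, hsdef]
  rw [hpow]
  have hxa : x + a + e = (x + e) + a := by ring
  have hxe : x + (e + a / s) = (x + e) + a / s := by ring
  rw [hxa, hxe]
  linear_combination (1 - c) ^ j * hkey

/-- The iterated derivative keeps the shifted-power shape. -/
lemma cDerivIter_shape (q : ℕ) (c : K) (hfrob : ∀ a b : K, (a + b) ^ q = a ^ q + b ^ q)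
    (hcq : c ^ q = c) (hc : c ≠ 1) :
    ∀ (as : List K) (j : ℕ) (e μ : K), ∃ e' μ',
      cDerivIter c as (fun x => (1 - c) ^ j * (x + e) ^ (q + 1) + μ)
        = fun x => (1 - c) ^ (j + as.length) * (x + e') ^ (q + 1) + μ' := by
  intro as
  induction as with
  | nil => exact fun j e μ => ⟨e, μ, by simp [cDerivIter_nil]⟩
  | cons a as ih =>
    intro j e μ
    obtain ⟨e1, μ1, h1⟩ := cDeriv_step q c hfrob hcq hc a e μ j
    obtain ⟨e', μ', h2⟩ := ih (j + 1) e1 μ1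
    refine ⟨e', μ', ?_⟩
    rw [cDerivIter_cons, h1, h2]
    have : j + 1 + as.length = j + (a :: as).length := by
      simp [List.length_cons]; omega
    rw [this]

lemma cDerivIter_gold (q : ℕ) (c : K) (hfrob : ∀ a b : K, (a + b) ^ q = a ^ q + b ^ q)
    (hcq : c ^ q = c) (hc : c ≠ 1) (as : List K) :
    ∃ e' μ', cDerivIter c as (fun y => y ^ (q + 1))
      = fun x => (1 - c) ^ as.length * (x + e') ^ (q + 1) + μ' := by
  obtain ⟨e', μ', h⟩ := cDerivIter_shape q c hfrob hcq hc as 0 0 0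
  refine ⟨e', μ', ?_⟩
  have hF : (fun y : K => y ^ (q + 1))
      = fun x : K => (1 - c) ^ (0 : ℕ) * (x + 0) ^ (q + 1) + 0 := by
    funext y; simp
  rw [hF, h]
  simp

variable [Fintype K] [DecidableEq K]

open Polynomial in
/-- In a finite field, the number of `m`-th roots of unity is `gcd m (card K - 1)`. -/
lemma card_pow_eq_one (m : ℕ) (hm : 0 < m) :
    Nat.card {z : K // z ^ m = 1} = Nat.gcd m (Fintype.card K - 1) := by
  classical
  set N : ℕ := Fintype.card K - 1 with hN
  have hNcard : N = Fintype.card Kˣ := (Fintype.card_units (α := K)).symm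
  set g : ℕ := Nat.gcd m N with hg
  have hg0 : 0 < g := Nat.gcd_pos_of_pos_left _ hm
  have hgN : g ∣ N := Nat.gcd_dvd_right m N
  have hN0 : 0 < N := by rw [hNcard]; exact Fintype.card_pos
  -- the solution sets of `z^m = 1` and `z^g = 1` coincide
  have hsets : ∀ z : K, z ^ m = 1 ↔ z ^ g = 1 := by
    intro z
    constructor
    · intro hzm
      have hz : z ≠ 0 := by
        intro h; rw [h, zero_pow hm.ne'] at hzm; exact zero_ne_one hzm
      have hzN : z ^ N = 1 := FiniteField.pow_card_sub_one_eq_one z hz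
      have hbez : (g : ℤ) = m * Nat.gcdA m N + N * Nat.gcdB m N := Nat.gcd_eq_gcd_ab m N
      have : z ^ (g : ℤ) = 1 := by
        rw [hbez, zpow_add₀ hz, zpow_mul, zpow_mul]
        rw [zpow_natCast, zpow_natCast, hzm, hzN, one_zpow, one_zpow, one_mul]
      rwa [zpow_natCast] at this
    · intro hzg
      obtain ⟨r, hr⟩ := Nat.gcd_dvd_left m N
      rw [hr, pow_mul, hzg, one_pow]
  -- find a primitive g-th root of unity
  obtain ⟨ζ, hζ⟩ := IsCyclic.exists_generator (α := Kˣ)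
  have horder : orderOf ζ = N := by
    rw [orderOf_eq_card_of_forall_mem_zpowers hζ, Nat.card_eq_fintype_card, hNcard]
  have hdvd : N / g ∣ N := Nat.div_dvd_of_dvd hgN
  have horderξ : orderOf (ζ ^ (N / g)) = g := by
    rw [orderOf_pow, horder, Nat.gcd_eq_right hdvd, Nat.div_div_self hgN hN0.ne']
  have hprimu : IsPrimitiveRoot (ζ ^ (N / g)) g := by
    have h0 := IsPrimitiveRoot.orderOf (ζ ^ (N / g))
    rwa [horderξ] at h0
  have hprim : IsPrimitiveRoot ((ζ ^ (N / g) : Kˣ) : K) g :=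
    IsPrimitiveRoot.coe_units_iff.mpr hprimu
  have hcardroots : (nthRootsFinset g (1 : K)).card = g := hprim.card_nthRootsFinset
  rw [Nat.card_eq_fintype_card, Fintype.card_subtype]
  rw [← hcardroots]
  congr 1
  ext z
  simp only [Finset.mem_filter, Finset.mem_univ, true_and, mem_nthRootsFinset hg0 (1 : K)]
  exact hsets z

/-- Upper bound: `z ^ m = d` has at most `gcd m (card K - 1)` solutions. -/
lemma card_pow_eq_le (m : ℕ) (hm : 0 < m) (d : K) :
    Nat.card {z : K // z ^ m = d} ≤ Nat.gcd m (Fintype.card K - 1) := by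
  classical
  have hg0 : 0 < Nat.gcd m (Fintype.card K - 1) := Nat.gcd_pos_of_pos_left _ hm
  rcases isEmpty_or_nonempty {z : K // z ^ m = d} with hE | hNE
  · simp [Nat.card_of_isEmpty]
  · obtain ⟨⟨z₀, hz₀⟩⟩ := hNE
    by_cases hd : d = 0
    · have hsub : Subsingleton {z : K // z ^ m = d} := by
        constructor
        rintro ⟨x, hx⟩ ⟨y, hy⟩
        have hx0 : x = 0 := pow_eq_zero_iff hm.ne' |>.mp (by rw [hx, hd])
        have hy0 : y = 0 := pow_eq_zero_iff hm.ne' |>.mp (by rw [hy, hd])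
        simp [hx0, hy0]
      have h1 : Nat.card {z : K // z ^ m = d} = 1 :=
        Nat.card_eq_one_iff_unique.mpr ⟨hsub, ⟨⟨z₀, hz₀⟩⟩⟩
      rw [h1]; exact hg0
    · have hz₀0 : z₀ ≠ 0 := by
        intro h; rw [h, zero_pow hm.ne'] at hz₀; exact hd hz₀.symm
      have hinj : Function.Injective
          (fun z : {z : K // z ^ m = d} => (⟨(z : K) / z₀, by
            rw [div_pow, z.2, hz₀, div_self hd]⟩ : {w : K // w ^ m = 1})) := by
        rintro ⟨x, hx⟩ ⟨y, hy⟩ h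
        simp only [Subtype.mk.injEq, div_eq_div_iff hz₀0 hz₀0] at h
        exact Subtype.ext (mul_right_cancel₀ hz₀0 h)
      calc Nat.card {z : K // z ^ m = d}
          ≤ Nat.card {w : K // w ^ m = 1} := Nat.card_le_card_of_injective _ hinj
        _ = _ := card_pow_eq_one m hm

end Aux

theorem stmt19 (p n k : ℕ) (hp : p.Prime) (hk : 1 ≤ k) (hkn : k < n)
    (K : Type*) [Field K] [Fintype K] (hK : Fintype.card K = p ^ n)
    (c : K) (hcsub : c ^ p ^ Nat.gcd k n = c) (hc : c ≠ 1)
    (t : ℕ) (ht : 1 ≤ t) :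
    (∀ as : List K, as.length = t → ∀ b : K,
      Nat.card {x : K // cDerivIter c as (fun y => y ^ (p ^ k + 1)) x = b}
        ≤ Nat.gcd (p ^ k + 1) (p ^ n - 1)) ∧
    (∃ as : List K, as.length = t ∧ ∃ b : K,
      Nat.card {x : K // cDerivIter c as (fun y => y ^ (p ^ k + 1)) x = b}
        = Nat.gcd (p ^ k + 1) (p ^ n - 1)) := by
  classical
  haveI : Fact p.Prime := ⟨hp⟩
  -- characteristic of K is p
  haveI hchar : CharP K p := by
    haveI : CharP K (ringChar K) := ringChar.charP K
    obtain ⟨n', hp', hcard⟩ := FiniteField.card K (ringChar K)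
    have hpn : p ^ n = ringChar K ^ (n' : ℕ) := by rw [← hK, hcard]
    have hpdvd : p ∣ ringChar K ^ (n' : ℕ) := by
      rw [← hpn]
      exact dvd_pow_self p (by omega)
    have : p = ringChar K := ((Nat.prime_dvd_prime_iff_eq hp hp').mp
      (hp.dvd_of_dvd_pow hpdvd))
    rw [this]; infer_instance
  set q : ℕ := p ^ k with hq
  have hfrob : ∀ a b : K, (a + b) ^ q = a ^ q + b ^ q := fun a b => by rw [hq]; exact add_pow_char_pow a b p k
  -- c is fixed by the q-power Frobenius
  have hcq : c ^ q = c := by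
    have hd : Nat.gcd k n ∣ k := Nat.gcd_dvd_left k n
    obtain ⟨r, hr⟩ := hd
    have haux : ∀ r : ℕ, c ^ p ^ (Nat.gcd k n * r) = c := by
      intro r
      induction r with
      | zero => simp
      | succ r ih => rw [Nat.mul_succ, pow_add, pow_mul, ih, hcsub]
    rw [hq, hr]
    exact haux r
  have hm : 0 < q + 1 := Nat.succ_pos q
  have hlam : (1 - c) ^ t ≠ 0 := pow_ne_zero t (sub_ne_zero.mpr (Ne.symm hc))
  have hcardK : Fintype.card K - 1 = p ^ n - 1 := by rw [hK]
  have hgoal : Nat.gcd (p ^ k + 1) (p ^ n - 1) = Nat.gcd (q + 1) (Fintype.card K - 1) := by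
    rw [hcardK, hq]
  constructor
  · intro as hlen b
    obtain ⟨e, μ, hshape⟩ := cDerivIter_gold q c hfrob hcq hc as
    rw [hlen] at hshape
    have hiff : ∀ x : K, cDerivIter c as (fun y => y ^ (p ^ k + 1)) x = b
        ↔ ((Equiv.addRight e) x) ^ (q + 1) = (b - μ) / (1 - c) ^ t := by
      intro x
      rw [show cDerivIter c as (fun y => y ^ (p ^ k + 1)) x
            = (1 - c) ^ t * (x + e) ^ (q + 1) + μ from congrFun hshape x]
      simp only [Equiv.coe_addRight]
      rw [eq_div_iff hlam]
      constructor <;> intro h <;> linear_combination h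
    have hequiv : {x : K // cDerivIter c as (fun y => y ^ (p ^ k + 1)) x = b}
        ≃ {z : K // z ^ (q + 1) = (b - μ) / (1 - c) ^ t} :=
      Equiv.subtypeEquiv (Equiv.addRight e) hiff
    rw [Nat.card_congr hequiv, hgoal]
    exact card_pow_eq_le (q + 1) hm _
  · refine ⟨List.replicate t 0, List.length_replicate, ?_⟩
    obtain ⟨e, μ, hshape⟩ := cDerivIter_gold q c hfrob hcq hc (List.replicate t 0)
    rw [List.length_replicate] at hshape
    refine ⟨(1 - c) ^ t + μ, ?_⟩
    have hiff : ∀ x : K, cDerivIter c (List.replicate t 0) (fun y => y ^ (p ^ k + 1)) x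
          = (1 - c) ^ t + μ
        ↔ ((Equiv.addRight e) x) ^ (q + 1) = 1 := by
      intro x
      rw [show cDerivIter c (List.replicate t 0) (fun y => y ^ (p ^ k + 1)) x
            = (1 - c) ^ t * (x + e) ^ (q + 1) + μ from congrFun hshape x]
      simp only [Equiv.coe_addRight]
      constructor
      · intro h
        have h' : (1 - c) ^ t * (x + e) ^ (q + 1) = (1 - c) ^ t * 1 := by
          rw [mul_one]; linear_combination h
        exact mul_left_cancel₀ hlam h'
      · intro h
        rw [h, mul_one]
    have hequiv : {x : K // cDerivIter c (List.replicate t 0)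
          (fun y => y ^ (p ^ k + 1)) x = (1 - c) ^ t + μ}
        ≃ {z : K // z ^ (q + 1) = 1} :=
      Equiv.subtypeEquiv (Equiv.addRight e) hiff
    rw [Nat.card_congr hequiv, hgoal]
    exact card_pow_eq_one (q + 1) hm
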